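/- If r is an odd prime, q = 2^(2n+1) with n ≥ 1, and s = 2^(n+1), then r divides at most one of the three integers q-1, q-s+1, q+s+1. -/
import Mathlib


/-- If `r` is an odd prime, `q = 2^(2n+1)` with `n ≥ 1` and `s = 2^(n+1)`, then `r` divides
at most one of the three integers `q-1`, `q-s+1`, `q+s+1`. -/
theorem suzuki_prime_divides_at_most_one_factor (n : ℕ) (hn : 1 ≤ n) (q s : ℤ)
    (hq : q = 2 ^ (2 * n + 1)) (hs : s = 2 ^ (n + 1))
    (r : ℕ) (hr : r.Prime) (hodd : Odd r)
    (f : Fin 3 → ℤ) (hf : f = ![q - 1, q - s + 1, q + s + 1]) :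
    ∀ i j : Fin 3, (r : ℤ) ∣ f i → (r : ℤ) ∣ f j → i = j := by
  have hp : Prime (r : ℤ) := Nat.prime_iff_prime_int.mp hr
  have h2 : ¬ (r : ℤ) ∣ 2 := by
    intro h
    have : r ∣ 2 := by exact_mod_cast h
    have := (Nat.prime_dvd_prime_iff_eq hr Nat.prime_two).mp this
    rcases hodd with ⟨k, hk⟩; omega
  have hsq : s * s = 2 * q := by
    subst hq hs
    rw [← pow_add, ← pow_succ']
    congr 1; omega
  -- case A helper: r divides q-1 and one of q±s+1 → False
  have caseA : ∀ t : ℤ, t = s ∨ t = -s → (r:ℤ) ∣ q - 1 → (r:ℤ) ∣ q - t + 1 → False := by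
    intro t ht h1 h2'
    have hmul : (q - t + 1) * (q + t + 1) = q * q + 1 := by
      rcases ht with rfl | rfl <;> nlinarith [hsq]
    have hd1 : (r:ℤ) ∣ q * q + 1 := hmul ▸ h2'.mul_right (q + t + 1)
    have hd2 : (r:ℤ) ∣ q * q - 1 := by
      have : (q - 1) * (q + 1) = q * q - 1 := by ring
      exact this ▸ h1.mul_right (q + 1)
    exact h2 (by have := dvd_sub hd1 hd2; simpa using this)
  have caseB : (r:ℤ) ∣ q - s + 1 → (r:ℤ) ∣ q + s + 1 → False := by
    intro ha hb
    have hds : (r:ℤ) ∣ 2 * s := by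
      have := dvd_sub hb ha; simpa [two_mul] using this
    rcases hp.dvd_mul.mp hds with h | h
    · exact h2 h
    · exact h2 (hp.dvd_of_dvd_pow (hs ▸ h))
  subst hf
  intro i j hi hj
  fin_cases i <;> fin_cases j <;> simp_all [Fin.isValue] <;>
    first
    | rfl
    | exact absurd hj (fun h => caseA s (Or.inl rfl) hi h)
    | exact absurd hj (fun h => caseA (-s) (Or.inr rfl) hi (by simpa using h))
    | exact absurd hi (fun h => caseA s (Or.inl rfl) hj h)
    | exact absurd hi (fun h => caseA (-s) (Or.inr rfl) hj (by simpa using h))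
    | exact absurd hj (fun h => caseB hi h)
    | exact absurd hi (fun h => caseB hj h)
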